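/- arXiv:1610.03972 — 3 statements merged into one kernel-verified Lean document; each statement's English description precedes it below -/
import Mathlib

section
/- If S is an independent set in a connected graph G belonging to class W_2, then deg(v) ≤ |N(S)| − |S| + 1 for every vertex v ∈ S. -/
open Finset

/-- A finset of vertices is independent: no two of its members are adjacent. -/
def IndepSet {V : Type*} (G : SimpleGraph V) (A : Finset V) : Prop :=
  ∀ u ∈ A, ∀ v ∈ A, ¬ G.Adj u v

open scoped Classical in
/-- Maximum size of an independent set contained in `s` (independence number of `G[s]`). -/
noncomputable def alphaOn {V : Type*} [Fintype V] (G : SimpleGraph V) (s : Finset V) : ℕ :=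
  ((s.powerset).filter (fun A => IndepSet G A)).sup Finset.card

/-- The independence number of `G`. -/
noncomputable def alpha {V : Type*} [Fintype V] (G : SimpleGraph V) : ℕ :=
  alphaOn G Finset.univ

/-- The induced subgraph `G[s]` is well-covered: every maximal independent subset of `s`
has maximum cardinality. -/
def WellCoveredOn {V : Type*} [Fintype V] (G : SimpleGraph V) (s : Finset V) : Prop :=
  ∀ A ⊆ s, IndepSet G A →
    (∀ B ⊆ s, IndepSet G B → A ⊆ B → A = B) → A.card = alphaOn G s

/-- `G` is well-covered. -/
def WellCovered {V : Type*} [Fintype V] (G : SimpleGraph V) : Prop :=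
  WellCoveredOn G Finset.univ

open scoped Classical in
/-- The open neighborhood `N(A)`: vertices having a neighbor in `A`. -/
noncomputable def nbhd {V : Type*} [Fintype V] (G : SimpleGraph V) (A : Finset V) : Finset V :=
  Finset.univ.filter (fun v => ∃ u ∈ A, G.Adj u v)

/-- The closed neighborhood `N[A] = A ∪ N(A)`. -/
noncomputable def closedNbhd {V : Type*} [Fintype V] [DecidableEq V] (G : SimpleGraph V) (A : Finset V) :
    Finset V :=
  A ∪ nbhd G A

/-- The induced subgraph `G[s]` is in class `W₂`: every two disjoint independent subsets of `s`
extend to two disjoint maximum independent subsets of `s`. -/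
def W2On {V : Type*} [Fintype V] (G : SimpleGraph V) (s : Finset V) : Prop :=
  ∀ A ⊆ s, ∀ B ⊆ s, IndepSet G A → IndepSet G B → Disjoint A B →
    ∃ S₁ ⊆ s, ∃ S₂ ⊆ s, IndepSet G S₁ ∧ IndepSet G S₂ ∧
      S₁.card = alphaOn G s ∧ S₂.card = alphaOn G s ∧ Disjoint S₁ S₂ ∧ A ⊆ S₁ ∧ B ⊆ S₂

/-- `G` belongs to class `W₂`. -/
def W2 {V : Type*} [Fintype V] (G : SimpleGraph V) : Prop :=
  W2On G Finset.univ

lemma indep_card_le {V : Type*} [Fintype V] (G : SimpleGraph V) {A : Finset V}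
    (hA : IndepSet G A) : A.card ≤ alphaOn G Finset.univ := by
  classical
  refine Finset.le_sup (f := Finset.card) ?_
  simp only [Finset.mem_filter, Finset.mem_powerset]
  exact ⟨Finset.subset_univ _, hA⟩

lemma exists_nbr_of_max {V : Type*} [Fintype V] (G : SimpleGraph V) {T : Finset V}
    (hT : IndepSet G T) (hcard : T.card = alphaOn G Finset.univ) {u : V} (hu : u ∉ T) :
    ∃ w ∈ T, G.Adj u w := by
  classical
  by_contra hc
  push_neg at hc
  have hind : IndepSet G (insert u T) := by
    intro x hx y hy hadj
    rcases Finset.mem_insert.1 hx with hx' | hx' <;> rcases Finset.mem_insert.1 hy with hy' | hy'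
    · subst hx'; subst hy'; exact G.irrefl hadj
    · subst hx'; exact hc y hy' hadj
    · subst hy'; exact hc x hx' hadj.symm
    · exact hT x hx' y hy' hadj
  have h1 := indep_card_le G hind
  rw [Finset.card_insert_of_notMem hu, hcard] at h1
  omega

lemma private_nbr {V : Type*} [Fintype V] (G : SimpleGraph V) (h : W2 G)
    {S : Finset V} (hS : IndepSet G S) {u : V} (hu : u ∈ S) :
    ∃ w, G.Adj u w ∧ ∀ s ∈ S, s ≠ u → ¬ G.Adj s w := by
  classical
  have hA : IndepSet G {u} := by
    intro x hx y hy
    simp only [Finset.mem_singleton] at hx hy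
    subst hx; subst hy; exact G.irrefl
  have hB : IndepSet G (S.erase u) := fun x hx y hy =>
    hS x (Finset.mem_of_mem_erase hx) y (Finset.mem_of_mem_erase hy)
  have hdisj : Disjoint ({u} : Finset V) (S.erase u) := by
    simp [Finset.disjoint_singleton_left]
  obtain ⟨S₁, -, S₂, -, hS₁, hS₂, hc₁, hc₂, hd, hAS₁, hBS₂⟩ :=
    h {u} (Finset.subset_univ _) (S.erase u) (Finset.subset_univ _) hA hB hdisj
  have huS₁ : u ∈ S₁ := hAS₁ (Finset.mem_singleton_self u)
  have huS₂ : u ∉ S₂ := fun hmem => (Finset.disjoint_left.1 hd huS₁) hmem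
  obtain ⟨w, hwS₂, hadj⟩ := exists_nbr_of_max G hS₂ hc₂ huS₂
  refine ⟨w, hadj, fun s hs hsu hadj' => ?_⟩
  have hsS₂ : s ∈ S₂ := hBS₂ (Finset.mem_erase.2 ⟨hsu, hs⟩)
  exact hS₂ s hsS₂ w hwS₂ hadj'

/-- In a connected W₂ graph, deg(v) ≤ |N(S)| - |S| + 1 for every independent set S and
every v ∈ S. -/
theorem stmt12 {V : Type*} [Fintype V] (G : SimpleGraph V) [DecidableRel G.Adj]
    (hconn : G.Connected) (h : W2 G) :
    ∀ S : Finset V, IndepSet G S → ∀ v ∈ S,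
      G.degree v + S.card ≤ (nbhd G S).card + 1 := by
  classical
  intro S hS v hv
  -- choice of private neighbors
  have hex : ∀ u : V, ∃ w : V, u ∈ S.erase v →
      (G.Adj u w ∧ ∀ s ∈ S, s ≠ u → ¬ G.Adj s w) := by
    intro u
    by_cases hu : u ∈ S.erase v
    · obtain ⟨w, hw⟩ := private_nbr G h hS (Finset.mem_of_mem_erase hu)
      exact ⟨w, fun _ => hw⟩
    · exact ⟨v, fun h' => absurd h' hu⟩
  choose f hf using hex
  have hNv : G.neighborFinset v ⊆ nbhd G S := by
    intro w hw
    simp only [nbhd, Finset.mem_filter, Finset.mem_univ, true_and]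
    exact ⟨v, hv, (SimpleGraph.mem_neighborFinset ..).1 hw⟩
  have hmaps : ∀ u ∈ S.erase v, f u ∈ (nbhd G S) \ (G.neighborFinset v) := by
    intro u hu
    obtain ⟨hadj, hpriv⟩ := hf u hu
    have huv : u ≠ v := (Finset.mem_erase.1 hu).1
    simp only [Finset.mem_sdiff, nbhd, Finset.mem_filter, Finset.mem_univ, true_and,
      SimpleGraph.mem_neighborFinset]
    exact ⟨⟨u, Finset.mem_of_mem_erase hu, hadj⟩, hpriv v hv (Ne.symm huv)⟩
  have hinj : Set.InjOn f (S.erase v : Finset V) := by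
    intro u hu u' hu' heq
    by_contra hne
    have h1 := (hf u hu).1
    have h2 := (hf u' hu').2 u (Finset.mem_of_mem_erase hu) hne
    rw [heq] at h1
    exact h2 h1
  have hcard1 : (S.erase v).card ≤ ((nbhd G S) \ (G.neighborFinset v)).card :=
    Finset.card_le_card_of_injOn f hmaps hinj
  have hcard2 : ((nbhd G S) \ (G.neighborFinset v)).card + (G.neighborFinset v).card
      = (nbhd G S).card := Finset.card_sdiff_add_card_eq_card hNv
  have hcard3 : (S.erase v).card + 1 = S.card := Finset.card_erase_add_one hv
  have hdeg : G.degree v = (G.neighborFinset v).card := rfl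
  omega
end

section
/- Let v be a non-isolated vertex of a well-covered graph G. Then v is a shedding vertex if and only if G − v is well-covered. -/
open Finset

/-- v is a shedding vertex of G: every independent set of G - N[v] can be enlarged by a
neighbor of v. -/
def Shedding {V : Type*} [DecidableEq V] (G : SimpleGraph V) (v : V) : Prop :=
  ∀ S : Finset V, IndepSet G S → (∀ x ∈ S, x ≠ v ∧ ¬ G.Adj v x) →
    ∃ u, G.Adj v u ∧ IndepSet G (insert u S)


section Aux
open scoped Classical
variable {V : Type*} [Fintype V]

lemma indep_subset {G : SimpleGraph V} {A B : Finset V}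
    (h : IndepSet G B) (hAB : A ⊆ B) : IndepSet G A :=
  fun u hu w hw => h u (hAB hu) w (hAB hw)

lemma card_le_alphaOn {G : SimpleGraph V} {s A : Finset V}
    (hA : A ⊆ s) (hi : IndepSet G A) : A.card ≤ alphaOn G s := by
  classical
  unfold alphaOn
  convert Finset.le_sup (f := Finset.card)
    (Finset.mem_filter.mpr ⟨Finset.mem_powerset.mpr hA, hi⟩)

lemma exists_maximal_ext (G : SimpleGraph V) {s A : Finset V} (hA : A ⊆ s)
    (hi : IndepSet G A) :
    ∃ B, A ⊆ B ∧ B ⊆ s ∧ IndepSet G B ∧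
      (∀ C ⊆ s, IndepSet G C → B ⊆ C → B = C) := by
  classical
  set T := (s.powerset).filter (fun B => IndepSet G B ∧ A ⊆ B) with hT
  have hne : T.Nonempty := ⟨A, by simp [hT, Finset.mem_powerset.mpr hA, hi]⟩
  obtain ⟨B, hBT, hmax⟩ := T.exists_max_image Finset.card hne
  simp only [hT, Finset.mem_filter, Finset.mem_powerset] at hBT
  refine ⟨B, hBT.2.2, hBT.1, hBT.2.1, ?_⟩
  intro C hCs hCi hBC
  have hCT : C ∈ T := by
    simp only [hT, Finset.mem_filter, Finset.mem_powerset]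
    exact ⟨hCs, hCi, hBT.2.2.trans hBC⟩
  exact Finset.eq_of_subset_of_card_le hBC (hmax C hCT)

lemma alphaOn_erase [DecidableEq V] {G : SimpleGraph V}
    (hwc : WellCovered G) {v u : V} (huv : G.Adj v u) :
    alphaOn G (Finset.univ.erase v) = alpha G := by
  classical
  have h1 : alphaOn G (Finset.univ.erase v) ≤ alpha G := by
    unfold alpha alphaOn
    refine Finset.sup_mono ?_
    intro A hA
    simp only [Finset.mem_filter, Finset.mem_powerset] at hA ⊢
    exact ⟨Finset.subset_univ A, hA.2⟩
  have hiu : IndepSet G {u} := by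
    intro a ha b hb
    simp only [Finset.mem_singleton] at ha hb
    subst ha; subst hb; exact G.irrefl
  obtain ⟨B, hsub, hBs, hBi, hBmax⟩ := exists_maximal_ext G (Finset.subset_univ {u}) hiu
  have hcard : B.card = alpha G := hwc B hBs hBi hBmax
  have hvB : v ∉ B := fun hvB =>
    hBi u (hsub (Finset.mem_singleton_self u)) v hvB huv.symm
  have hBe : B ⊆ Finset.univ.erase v := fun x hx =>
    Finset.mem_erase.mpr ⟨fun h => hvB (h ▸ hx), Finset.mem_univ x⟩
  exact le_antisymm h1 (hcard ▸ card_le_alphaOn hBe hBi)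

end Aux

/-- In a well-covered graph, a non-isolated vertex v is shedding iff G - v is
well-covered. -/
theorem stmt16 {V : Type*} [Fintype V] [DecidableEq V] (G : SimpleGraph V)
    (hwc : WellCovered G) (v : V) (hv : ∃ u, G.Adj v u) :
    Shedding G v ↔ WellCoveredOn G (Finset.univ.erase v) := by
  classical
  obtain ⟨u0, hu0⟩ := hv
  have halpha : alphaOn G (Finset.univ.erase v) = alpha G := alphaOn_erase hwc hu0
  constructor
  · intro hshed A hAs hAi hAmax
    rw [halpha]
    by_cases hcase : ∃ w ∈ A, G.Adj v w
    · obtain ⟨w, hwA, hvw⟩ := hcase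
      refine hwc A (Finset.subset_univ A) hAi ?_
      intro C _ hCi hAC
      refine hAmax C ?_ hCi hAC
      intro x hx
      refine Finset.mem_erase.mpr ⟨?_, Finset.mem_univ x⟩
      rintro rfl
      exact hCi w (hAC hwA) x hx hvw.symm
    · push_neg at hcase
      obtain ⟨u, huv, hins⟩ := hshed A hAi
        (fun x hx => ⟨fun h => (Finset.mem_erase.mp (hAs hx)).1 h, hcase x hx⟩)
      have huA : u ∉ A := fun h => hcase u h huv
      have hne : u ≠ v := fun h => G.irrefl (h ▸ huv)
      have : A = insert u A := hAmax (insert u A)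
        (by
          intro x hx
          rcases Finset.mem_insert.mp hx with rfl | hx
          · exact Finset.mem_erase.mpr ⟨hne, Finset.mem_univ x⟩
          · exact hAs hx)
        hins (Finset.subset_insert u A)
      exact absurd (this ▸ Finset.mem_insert_self u A) huA
  · intro hwcv S hSi hSv
    have hSe : S ⊆ Finset.univ.erase v := fun x hx =>
      Finset.mem_erase.mpr ⟨(hSv x hx).1, Finset.mem_univ x⟩
    obtain ⟨B, hSB, hBs, hBi, hBmax⟩ := exists_maximal_ext G hSe hSi
    have hcard : B.card = alpha G := by
      rw [← halpha]; exact hwcv B hBs hBi hBmax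
    have hvB : v ∉ B := fun h => (Finset.mem_erase.mp (hBs h)).1 rfl
    by_cases hcase : ∃ u ∈ B, G.Adj v u
    · obtain ⟨u, huB, huv⟩ := hcase
      refine ⟨u, huv, indep_subset hBi ?_⟩
      intro x hx
      rcases Finset.mem_insert.mp hx with rfl | hx
      · exact huB
      · exact hSB hx
    · push_neg at hcase
      exfalso
      have hins : IndepSet G (insert v B) := by
        intro a ha b hb
        rcases Finset.mem_insert.mp ha with ha' | ha' <;>
          rcases Finset.mem_insert.mp hb with hb' | hb'
        · subst ha'; subst hb'; exact G.irrefl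
        · subst ha'; exact hcase b hb'
        · subst hb'; exact fun h => hcase a ha' h.symm
        · exact hBi a ha' b hb'
      have hle : (insert v B).card ≤ alpha G :=
        card_le_alphaOn (Finset.subset_univ _) hins
      rw [Finset.card_insert_of_notMem hvB, hcard] at hle
      omega
end

section
/- Let G be a connected graph on n ≥ 2 vertices, H a graph with at least two vertices, and v ∈ V(H) a vertex not contained in all maximum independent sets of H. Then α(G(H,v)) = n·α(H), where G(H,v) is the graph obtained by identifying each vertex of G with the vertex v of its own copy of H. -/
open Finset

/-- The concatenation G(H,v): one copy of H per vertex u of G, with u identified with the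
vertex v of its copy (modeled as vertex type V(G) × V(H), vertex (u, v) playing u). -/
def Concat {VG VH : Type*} (G : SimpleGraph VG) (H : SimpleGraph VH) (v : VH) :
    SimpleGraph (VG × VH) :=
  SimpleGraph.fromRel (fun a b =>
    (a.1 = b.1 ∧ H.Adj a.2 b.2) ∨ (a.2 = v ∧ b.2 = v ∧ G.Adj a.1 b.1))

lemma card_le_alpha {V : Type*} [Fintype V] {G : SimpleGraph V} {A : Finset V}
    (hA : IndepSet G A) : A.card ≤ alpha G := by
  classical
  unfold alpha alphaOn
  refine Finset.le_sup (f := Finset.card) ?_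
  simp only [Finset.mem_filter, Finset.mem_powerset]
  exact ⟨Finset.subset_univ A, hA⟩

/-- If G is connected on n ≥ 2 vertices, H has ≥ 2 vertices and some maximum independent
set of H avoids v, then α(G(H,v)) = n · α(H). -/
theorem stmt18 {VG VH : Type*} [Fintype VG] [Fintype VH]
    (G : SimpleGraph VG) (H : SimpleGraph VH) (v : VH)
    (hG : G.Connected) (hn : 2 ≤ Fintype.card VG) (hH : 2 ≤ Fintype.card VH)
    (hv : ∃ S : Finset VH, IndepSet H S ∧ S.card = alpha H ∧ v ∉ S) :
    alpha (Concat G H v) = Fintype.card VG * alpha H := by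
  classical
  obtain ⟨S, hSind, hScard, hvS⟩ := hv
  apply le_antisymm
  · unfold alpha alphaOn
    apply Finset.sup_le
    intro A hA
    simp only [Finset.mem_filter] at hA
    have hAind := hA.2
    rw [Finset.card_eq_sum_card_fiberwise (f := Prod.fst) (t := Finset.univ)
      (fun x _ => Finset.mem_univ _)]
    have key : ∀ u : VG, (A.filter (fun x => x.1 = u)).card ≤ alpha H := by
      intro u
      set B := (A.filter (fun x => x.1 = u)).image Prod.snd with hB
      have hcard : (A.filter (fun x => x.1 = u)).card = B.card := by
        rw [hB, Finset.card_image_of_injOn]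
        intro x hx y hy hxy
        simp only [Finset.mem_coe, Finset.mem_filter] at hx hy
        exact Prod.ext (hx.2.trans hy.2.symm) hxy
      rw [hcard]
      apply card_le_alpha
      intro h1 h1m h2 h2m hadj
      simp only [hB, Finset.mem_image, Finset.mem_filter] at h1m h2m
      obtain ⟨x, ⟨hxA, hxu⟩, hx2⟩ := h1m
      obtain ⟨y, ⟨hyA, hyu⟩, hy2⟩ := h2m
      have : (Concat G H v).Adj x y := by
        refine ⟨?_, Or.inl (Or.inl ⟨hxu.trans hyu.symm, by rwa [hx2, hy2]⟩)⟩
        intro hxy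
        exact hadj.ne (by rw [← hx2, ← hy2, hxy])
      exact hAind x hxA y hyA this
    calc ∑ u : VG, (A.filter (fun x => x.1 = u)).card
        ≤ ∑ _u : VG, alpha H := Finset.sum_le_sum (fun u _ => key u)
      _ = Fintype.card VG * alpha H := by
          rw [Finset.sum_const, Finset.card_univ, smul_eq_mul]
  · have hT : IndepSet (Concat G H v) (Finset.univ ×ˢ S) := by
      intro x hx y hy hadj
      simp only [Finset.mem_product] at hx hy
      obtain ⟨hne, hrel⟩ := hadj
      rcases hrel with (⟨h1, h2⟩ | ⟨h1, h2, _⟩) | (⟨h1, h2⟩ | ⟨h1, h2, _⟩)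
      · exact hSind x.2 hx.2 y.2 hy.2 h2
      · exact hvS (h1 ▸ hx.2)
      · exact hSind y.2 hy.2 x.2 hx.2 h2
      · exact hvS (h1 ▸ hy.2)
    have := card_le_alpha hT
    rwa [Finset.card_product, Finset.card_univ, hScard] at this
end
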